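/- arXiv:1307.6348 — 2 statements merged into one kernel-verified Lean document; each statement's English description precedes it below -/
import Mathlib

section
/- Two disjunctive multiplicity expressions E₁ and E₂ over a finite alphabet Σ have equal languages, L(E₁) = L(E₂), if and only if they have equal characterizing triples, i.e., C_{E₁} = C_{E₂}, N_{E₁} = N_{E₂}, and P_{E₁} = P_{E₂}. -/
namespace LSXML

/-- A multiplicity: one of `*`, `+`, `?`, `1`, `0`. -/
inductive Mult : Type
  | star | plus | opt | one | zero
  deriving DecidableEq

/-- The set of natural numbers `⟦M⟧` denoted by a multiplicity `M`. -/
def Mult.sem : Mult → Set ℕ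
  | .star => Set.univ
  | .plus => {n | 1 ≤ n}
  | .opt  => {0, 1}
  | .one  => {1}
  | .zero => {0}

/-- A disjunctive multiplicity expression (DME) `D₁^{M₁} ∥ ⋯ ∥ D_n^{M_n}` where each
`D_i` is a nonempty disjunction `a₁^{M'₁} | ⋯ | a_k^{M'_k}` of symbols with
multiplicities, and every symbol of the alphabet occurs at most once in the
whole expression. -/
structure DME (α : Type) : Type where
  factors : List (List (α × Mult) × Mult)
  nonemptyDisj : ∀ d ∈ factors, d.1 ≠ []
  distinct : (factors.flatMap fun d => d.1.map Prod.fst).Nodup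

/-- `L(a^M) = {a^i : i ∈ ⟦M⟧}`. -/
def atomLang {α : Type} (a : α) (M : Mult) : Set (Multiset α) :=
  {w | ∃ i ∈ Mult.sem M, w = Multiset.replicate i a}

/-- `L(a₁^{M₁} | ⋯ | a_k^{M_k}) = L(a₁^{M₁}) ∪ ⋯ ∪ L(a_k^{M_k})`. -/
def disjLang {α : Type} (d : List (α × Mult)) : Set (Multiset α) :=
  {w | ∃ p ∈ d, w ∈ atomLang p.1 p.2}

/-- `L(D^M)`: multiset unions of `i` words of `L(D)`, for `i ∈ ⟦M⟧`. -/
def powLang {α : Type} (L : Set (Multiset α)) (M : Mult) : Set (Multiset α) :=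
  {w | ∃ ws : List (Multiset α), ws.length ∈ Mult.sem M ∧ (∀ u ∈ ws, u ∈ L) ∧ w = ws.sum}

/-- Unordered concatenation (elementwise multiset union) of a list of languages. -/
def concatLang {α : Type} : List (Set (Multiset α)) → Set (Multiset α)
  | [] => {0}
  | L :: Ls => {w | ∃ u ∈ L, ∃ v ∈ concatLang Ls, w = u + v}

/-- The language of unordered words of a DME. -/
def DME.lang {α : Type} (E : DME α) : Set (Multiset α) :=
  concatLang (E.factors.map fun d => powLang (disjLang d.1) d.2)

/-- A disjunction-free multiplicity expression `a₁^{M₁} ∥ ⋯ ∥ a_k^{M_k}` with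
pairwise distinct symbols. -/
structure MExpr (α : Type) : Type where
  entries : List (α × Mult)
  distinct : (entries.map Prod.fst).Nodup

/-- The language of a disjunction-free multiplicity expression: multisets `w`
with `w(a_i) ∈ ⟦M_i⟧` for each entry `a_i^{M_i}` and `w(b) = 0` for every other
symbol `b`. -/
def MExpr.lang {α : Type} [DecidableEq α] (e : MExpr α) : Set (Multiset α) :=
  {w | (∀ p ∈ e.entries, w.count p.1 ∈ Mult.sem p.2) ∧
       ∀ b : α, b ∉ e.entries.map Prod.fst → w.count b = 0}

/-- Finite rooted labeled trees. The list of children is to be understood as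
unordered: its order is irrelevant for satisfaction of multiplicity schemas. -/
inductive UTree (α : Type) : Type
  | node : α → List (UTree α) → UTree α

/-- The label of the root of a tree. -/
def UTree.label {α : Type} : UTree α → α
  | .node a _ => a

/-- A tree satisfies a family of DME rules if for every node, the multiset of
labels of its children belongs to the language of the rule of its label. -/
inductive UTree.Sat {α : Type} (R : α → DME α) : UTree α → Prop
  | node (a : α) (ts : List (UTree α)) :
      ((ts.map UTree.label : List α) : Multiset α) ∈ (R a).lang →
      (∀ t ∈ ts, UTree.Sat R t) →
      UTree.Sat R (UTree.node a ts)

/-- A disjunctive multiplicity schema (DMS): a root label together with a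
DME rule for every symbol of the alphabet. -/
structure DMS (α : Type) : Type where
  root : α
  rules : α → DME α

/-- The set `L(S)` of trees satisfying a DMS `S`. -/
def DMS.lang {α : Type} (S : DMS α) : Set (UTree α) :=
  {t | t.label = S.root ∧ UTree.Sat S.rules t}

/-- Satisfaction of a family of disjunction-free rules. -/
inductive UTree.MSat {α : Type} [DecidableEq α] (R : α → MExpr α) : UTree α → Prop
  | node (a : α) (ts : List (UTree α)) :
      ((ts.map UTree.label : List α) : Multiset α) ∈ (R a).lang →
      (∀ t ∈ ts, UTree.MSat R t) →
      UTree.MSat R (UTree.node a ts)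

/-- A disjunction-free multiplicity schema (MS). -/
structure MS (α : Type) : Type where
  root : α
  rules : α → MExpr α

/-- The set `L(S)` of trees satisfying an MS `S`. -/
def MS.lang {α : Type} [DecidableEq α] (S : MS α) : Set (UTree α) :=
  {t | t.label = S.root ∧ UTree.MSat S.rules t}


/-- The set `C_E` of conflicting pairs of siblings of a DME `E`. -/
def Ctrip {α : Type} (E : DME α) : Set (α × α) :=
  {p | ¬ ∃ w ∈ E.lang, p.1 ∈ w ∧ p.2 ∈ w}

/-- The extended cardinality map `N_E` of a DME `E`. -/
def Ntrip {α : Type} [DecidableEq α] (E : DME α) : Set (α × ℕ) :=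
  {p | ∃ w ∈ E.lang, w.count p.1 = p.2}

/-- The sets `P_E` of required symbols of a DME `E`. -/
def Ptrip {α : Type} (E : DME α) : Set (Set α) :=
  {X | ∀ w ∈ E.lang, ∃ a ∈ X, a ∈ w}

section CharProof

variable {α : Type} [DecidableEq α]

/-- The symbols of a factor. -/
def symOf (d : List (α × Mult) × Mult) : List α := d.1.map Prod.fst

/-- The language of a factor. -/
def factorLang (d : List (α × Mult) × Mult) : Set (Multiset α) :=
  powLang (disjLang d.1) d.2

/-- The language of a list of factors. -/
def Lang (fs : List (List (α × Mult) × Mult)) : Set (Multiset α) :=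
  concatLang (fs.map factorLang)

lemma mem_listSum {ws : List (Multiset α)} {a : α} (h : a ∈ ws.sum) :
    ∃ x ∈ ws, a ∈ x := by
  induction ws with
  | nil => simp at h
  | cons x rest ih =>
    rw [List.sum_cons, Multiset.mem_add] at h
    rcases h with h | h
    · exact ⟨x, by simp, h⟩
    · obtain ⟨y, hy, hay⟩ := ih h
      exact ⟨y, by simp [hy], hay⟩

lemma factor_support {d : List (α × Mult) × Mult} {u : Multiset α}
    (hu : u ∈ factorLang d) : ∀ a ∈ u, a ∈ symOf d := by
  obtain ⟨ws, -, hmem, rfl⟩ := hu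
  intro a ha
  obtain ⟨x, hx, hax⟩ := mem_listSum ha
  obtain ⟨p, hp, i, -, rfl⟩ := hmem x hx
  rw [Multiset.mem_replicate] at hax
  exact hax.2 ▸ List.mem_map_of_mem (f := Prod.fst) hp

lemma mult_unique {d : List (α × Mult)} (hnd : (d.map Prod.fst).Nodup)
    {a : α} {M₁ M₂ : Mult} (h1 : (a, M₁) ∈ d) (h2 : (a, M₂) ∈ d) : M₁ = M₂ := by
  have := List.inj_on_of_nodup_map hnd h1 h2 rfl
  exact congrArg Prod.snd this

/-- `c` is a sum of a nonempty list of positive elements of `⟦M'⟧`. -/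
def Rep (M' : Mult) (c : ℕ) : Prop :=
  ∃ ks : List ℕ, ks ≠ [] ∧ (∀ k ∈ ks, k ∈ M'.sem ∧ 1 ≤ k) ∧ ks.sum = c

lemma rep_of_counts {d : List (α × Mult)} (hnd : (d.map Prod.fst).Nodup)
    {ws : List (Multiset α)} (hws : ∀ x ∈ ws, x ∈ disjLang d) {a : α}
    (hc : 1 ≤ (ws.sum).count a) :
    ∃ M', (a, M') ∈ d ∧ Rep M' ((ws.sum).count a) := by
  induction ws with
  | nil => simp at hc
  | cons x rest ih =>
    have hrest : ∀ y ∈ rest, y ∈ disjLang d := fun y hy => hws y (by simp [hy])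
    obtain ⟨p, hp, i, hi, rfl⟩ := hws x (by simp)
    rw [List.sum_cons, Multiset.count_add, Multiset.count_replicate] at hc ⊢
    by_cases hap : p.1 = a
    · rw [if_pos hap] at hc ⊢
      have hpa : (a, p.2) ∈ d := by rw [← hap]; exact hp
      rcases Nat.eq_zero_or_pos i with hi0 | hi1
      · subst hi0
        rw [zero_add] at hc ⊢
        exact ih hrest hc
      · rcases Nat.eq_zero_or_pos ((rest.sum).count a) with hc2 | hc2
        · refine ⟨p.2, hpa, [i], by simp, ?_, by simp [hc2]⟩
          intro k hk; rw [List.mem_singleton] at hk; subst hk; exact ⟨hi, hi1⟩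
        · obtain ⟨M'', hm'', ks, hne, hks, hsum⟩ := ih hrest hc2
          have hMM : M'' = p.2 := mult_unique hnd hm'' hpa
          subst hMM
          refine ⟨p.2, hpa, i :: ks, by simp, ?_, by simp [hsum]⟩
          intro k hk
          rcases List.mem_cons.mp hk with rfl | hk
          · exact ⟨hi, hi1⟩
          · exact hks k hk
    · rw [if_neg hap, zero_add] at hc ⊢
      exact ih hrest hc

lemma sum_replicates (a : α) (ks : List ℕ) :
    (ks.map fun k => Multiset.replicate k a).sum = Multiset.replicate ks.sum a := by
  induction ks with
  | nil => simp
  | cons k ks ih => simp [ih, Multiset.replicate_add]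

lemma build {d : List (α × Mult)} :
    ∀ (s : Finset α) (v : Multiset α), (∀ a ∈ v, a ∈ s) →
      (∀ a ∈ v, ∃ M', (a, M') ∈ d ∧ Rep M' (v.count a)) →
      ∃ ws : List (Multiset α), (∀ x ∈ ws, x ∈ disjLang d) ∧ ws.sum = v := by
  intro s
  induction s using Finset.induction_on with
  | empty =>
    intro v hs _
    refine ⟨[], by simp, ?_⟩
    have : v = 0 := Multiset.eq_zero_of_forall_notMem fun a ha => by simpa using hs a ha
    simp [this]
  | @insert a s' ha ih =>
    intro v hs hrep
    by_cases hav : a ∈ v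
    · obtain ⟨M', hM', ks, hne, hks, hsum⟩ := hrep a hav
      have hsplit : v = Multiset.replicate (v.count a) a + v.filter (· ≠ a) := by
        ext b
        rw [Multiset.count_add, Multiset.count_replicate, Multiset.count_filter]
        by_cases hba : b = a
        · subst hba; simp
        · have hab : ¬ a = b := fun h => hba h.symm
          simp [hba, hab]
      have hss : ∀ b ∈ v.filter (· ≠ a), b ∈ s' := by
        intro b hb
        obtain ⟨hbv, hbne⟩ := Multiset.mem_filter.mp hb
        rcases Finset.mem_insert.mp (hs b hbv) with h | h
        · exact absurd h hbne
        · exact h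
      have hrep' : ∀ b ∈ v.filter (· ≠ a),
          ∃ M', (b, M') ∈ d ∧ Rep M' ((v.filter (· ≠ a)).count b) := by
        intro b hb
        obtain ⟨hbv, hbne⟩ := Multiset.mem_filter.mp hb
        rw [Multiset.count_filter, if_pos hbne]
        exact hrep b hbv
      obtain ⟨ws', hws', hsum'⟩ := ih (v.filter (· ≠ a)) hss hrep'
      refine ⟨(ks.map fun k => Multiset.replicate k a) ++ ws', ?_, ?_⟩
      · intro x hx
        rcases List.mem_append.mp hx with hx | hx
        · obtain ⟨k, hk, rfl⟩ := List.mem_map.mp hx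
          exact ⟨(a, M'), hM', k, (hks k hk).1, rfl⟩
        · exact hws' x hx
      · rw [List.sum_append, sum_replicates, hsum, hsum']
        exact hsplit.symm
    · refine ih v (fun b hb => ?_) hrep
      rcases Finset.mem_insert.mp (hs b hb) with h | h
      · exact absurd (h ▸ hb) hav
      · exact h

lemma factor_small {d1 : List (α × Mult)} {M : Mult}
    (hsmall : M = Mult.one ∨ M = Mult.opt) {u : Multiset α}
    (hu : u ∈ factorLang (d1, M)) : u = 0 ∨ u ∈ disjLang d1 := by
  obtain ⟨ws, hlen, hmem, rfl⟩ := hu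
  have hle : ws.length ≤ 1 := by
    rcases hsmall with rfl | rfl
    · simp only [Mult.sem, Set.mem_singleton_iff] at hlen; omega
    · simp only [Mult.sem, Set.mem_insert_iff, Set.mem_singleton_iff] at hlen
      omega
  rcases ws with _ | ⟨x, _ | ⟨y, t⟩⟩
  · left; rfl
  · right; simpa using hmem x (by simp)
  · exfalso; simp at hle

lemma factor_single {d1 : List (α × Mult)} {M : Mult}
    (hsmall : M = Mult.one ∨ M = Mult.opt)
    {v : Multiset α} (hv0 : v ≠ 0)
    (h1 : ∀ a ∈ v, a ∈ d1.map Prod.fst)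
    (h2 : ∀ a ∈ d1.map Prod.fst, ∃ u ∈ factorLang (d1, M), u.count a = v.count a)
    (h3 : ∀ a b : α, a ∈ v → b ∈ v → ∃ u ∈ factorLang (d1, M), a ∈ u ∧ b ∈ u) :
    v ∈ factorLang (d1, M) := by
  obtain ⟨a, hav⟩ := Multiset.exists_mem_of_ne_zero hv0
  have hrep : v = Multiset.replicate (v.count a) a := by
    ext b
    rw [Multiset.count_replicate]
    by_cases hba : b = a
    · subst hba; simp
    · rw [if_neg (fun h : a = b => hba h.symm)]
      by_contra hb
      have hbv : b ∈ v := Multiset.count_pos.mp (Nat.pos_of_ne_zero hb)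
      obtain ⟨u, hu, hbu, hau⟩ := h3 b a hbv hav
      rcases factor_small hsmall hu with rfl | ⟨p, hp, i, -, rfl⟩
      · simp at hbu
      · rw [Multiset.mem_replicate] at hbu hau
        exact hba (hbu.2.trans hau.2.symm)
  obtain ⟨u, hu, hcnt⟩ := h2 a (h1 a hav)
  have hca : 1 ≤ v.count a := Multiset.count_pos.mpr hav
  rcases factor_small hsmall hu with rfl | ⟨p, hp, i, -, rfl⟩
  · simp at hcnt; omega
  · rw [Multiset.count_replicate] at hcnt
    by_cases hap : p.1 = a
    · rw [if_pos hap] at hcnt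
      rw [hrep, ← hcnt, ← hap]
      exact hu
    · rw [if_neg hap] at hcnt; omega

lemma factor_many {d1 : List (α × Mult)} {M : Mult}
    (hbig : M = Mult.star ∨ M = Mult.plus)
    (hnd : (d1.map Prod.fst).Nodup)
    {v : Multiset α} (hv0 : v ≠ 0)
    (h2 : ∀ a ∈ v, ∃ u ∈ factorLang (d1, M), u.count a = v.count a) :
    v ∈ factorLang (d1, M) := by
  have hrep : ∀ a ∈ v, ∃ M', (a, M') ∈ d1 ∧ Rep M' (v.count a) := by
    intro a hav
    obtain ⟨u, hu, hcnt⟩ := h2 a hav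
    obtain ⟨ws, -, hmem, rfl⟩ := hu
    have h1c : 1 ≤ (ws.sum).count a := by
      rw [hcnt]; exact Multiset.count_pos.mpr hav
    obtain ⟨M', hM', hR⟩ := rep_of_counts hnd hmem h1c
    exact ⟨M', hM', hcnt ▸ hR⟩
  obtain ⟨ws, hws, hsum⟩ :=
    build v.toFinset v (fun a ha => Multiset.mem_toFinset.mpr ha) hrep
  refine ⟨ws, ?_, hws, hsum.symm⟩
  have hwsne : ws ≠ [] := by
    rintro rfl
    simp only [List.sum_nil] at hsum
    exact hv0 hsum.symm
  rcases hbig with rfl | rfl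
  · trivial
  · have : ws.length ≠ 0 := fun h => hwsne (List.length_eq_zero_iff.mp h)
    exact Nat.pos_of_ne_zero this

lemma factorF {d1 : List (α × Mult)} {M : Mult} (hne : d1 ≠ [])
    (hnd : (d1.map Prod.fst).Nodup) {v : Multiset α}
    (h1 : ∀ a ∈ v, a ∈ d1.map Prod.fst)
    (h2 : ∀ a ∈ d1.map Prod.fst, ∃ u ∈ factorLang (d1, M), u.count a = v.count a)
    (h3 : ∀ a b : α, a ∈ v → b ∈ v → ∃ u ∈ factorLang (d1, M), a ∈ u ∧ b ∈ u)
    (h4 : (0 : Multiset α) ∉ factorLang (d1, M) → v ≠ 0) :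
    v ∈ factorLang (d1, M) := by
  by_cases hv0 : v = 0
  · subst hv0
    by_cases h0 : (0 : Multiset α) ∈ factorLang (d1, M)
    · exact h0
    · exact absurd rfl (h4 h0)
  cases M with
  | star => exact factor_many (Or.inl rfl) hnd hv0 (fun a ha => h2 a (h1 a ha))
  | plus => exact factor_many (Or.inr rfl) hnd hv0 (fun a ha => h2 a (h1 a ha))
  | opt => exact factor_single (Or.inr rfl) hv0 h1 h2 h3
  | one => exact factor_single (Or.inl rfl) hv0 h1 h2 h3
  | zero =>
    exfalso; apply hv0
    apply Multiset.eq_zero_of_forall_notMem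
    intro a ha0
    obtain ⟨u, ⟨ws, hlen, -, rfl⟩, hcnt⟩ := h2 a (h1 a ha0)
    simp only [Mult.sem, Set.mem_singleton_iff] at hlen
    rw [List.length_eq_zero_iff.mp hlen] at hcnt
    simp only [List.sum_nil, Multiset.count_zero] at hcnt
    have := Multiset.count_pos.mpr ha0
    omega

lemma lang_support {fs : List (List (α × Mult) × Mult)} {u : Multiset α}
    (hu : u ∈ Lang fs) : ∀ a ∈ u, a ∈ fs.flatMap symOf := by
  induction fs generalizing u with
  | nil =>
    have hu0 : u = 0 := by simpa [Lang, concatLang] using hu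
    intro a ha
    rw [hu0] at ha
    simp at ha
  | cons f fs ih =>
    simp only [Lang, List.map_cons, concatLang, Set.mem_setOf_eq] at hu
    obtain ⟨x, hx, y, hy, rfl⟩ := hu
    intro a ha
    rw [List.flatMap_cons, List.mem_append]
    rcases Multiset.mem_add.mp ha with h | h
    · exact Or.inl (factor_support hx a h)
    · exact Or.inr (ih hy a h)

lemma lang_restrict {fs : List (List (α × Mult) × Mult)}
    (hnd : (fs.flatMap symOf).Nodup) {u : Multiset α} (hu : u ∈ Lang fs) :
    ∀ d ∈ fs, u.filter (· ∈ symOf d) ∈ factorLang d := by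
  induction fs generalizing u with
  | nil => intro d hd; simp at hd
  | cons f fs ih =>
    rw [List.flatMap_cons] at hnd
    obtain ⟨hnd1, hnd2, hdisj⟩ := List.nodup_append.mp hnd
    simp only [Lang, List.map_cons, concatLang, Set.mem_setOf_eq] at hu
    obtain ⟨x, hx, y, hy, rfl⟩ := hu
    have hysupp : ∀ a ∈ y, a ∈ fs.flatMap symOf := lang_support hy
    intro d hd
    rcases List.mem_cons.mp hd with rfl | hd
    · have hfx : x.filter (· ∈ symOf d) = x :=
        Multiset.filter_eq_self.mpr (factor_support hx)
      have hfy : y.filter (· ∈ symOf d) = 0 :=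
        Multiset.filter_eq_nil.mpr (fun a ha had => hdisj a had a (hysupp a ha) rfl)
      rw [Multiset.filter_add, hfx, hfy, add_zero]
      exact hx
    · have hfx : x.filter (· ∈ symOf d) = 0 :=
        Multiset.filter_eq_nil.mpr (fun a ha had =>
          hdisj a (factor_support hx a ha) a (List.mem_flatMap.mpr ⟨d, hd, had⟩) rfl)
      rw [Multiset.filter_add, hfx, zero_add]
      exact ih hnd2 hy d hd

lemma lang_reconstruct {fs : List (List (α × Mult) × Mult)}
    (hnd : (fs.flatMap symOf).Nodup) {v : Multiset α}
    (hsupp : ∀ a ∈ v, a ∈ fs.flatMap symOf)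
    (hf : ∀ d ∈ fs, v.filter (· ∈ symOf d) ∈ factorLang d) :
    v ∈ Lang fs := by
  induction fs generalizing v with
  | nil =>
    have : v = 0 := Multiset.eq_zero_of_forall_notMem fun a ha => by simpa using hsupp a ha
    simp [Lang, concatLang, this]
  | cons f fs ih =>
    rw [List.flatMap_cons] at hnd
    obtain ⟨hnd1, hnd2, hdisj⟩ := List.nodup_append.mp hnd
    simp only [Lang, List.map_cons, concatLang, Set.mem_setOf_eq]
    refine ⟨v.filter (· ∈ symOf f), hf f (by simp),
      v.filter (fun a => ¬ a ∈ symOf f), ?_, (Multiset.filter_add_not _ v).symm⟩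
    apply ih hnd2
    · intro a ha
      obtain ⟨hav, hanf⟩ := Multiset.mem_filter.mp ha
      rcases List.mem_append.mp ((List.flatMap_cons (x := f) (xs := fs) (f := symOf)) ▸ hsupp a hav) with h | h
      · exact absurd h hanf
      · exact h
    · intro d hd
      rw [Multiset.filter_filter]
      have : Multiset.filter (fun a => a ∈ symOf d ∧ ¬ a ∈ symOf f) v
          = Multiset.filter (· ∈ symOf d) v := by
        apply Multiset.filter_congr
        intro x hx
        constructor
        · exact fun h => h.1
        · exact fun h => ⟨h, fun hxf => hdisj x hxf x (List.mem_flatMap.mpr ⟨d, hd, h⟩) rfl⟩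
      rw [this]
      exact hf d (List.mem_cons_of_mem f hd)

lemma nodup_of_mem {fs : List (List (α × Mult) × Mult)}
    (hnd : (fs.flatMap symOf).Nodup) {d} (hd : d ∈ fs) : (symOf d).Nodup := by
  induction fs with
  | nil => simp at hd
  | cons f fs ih =>
    rw [List.flatMap_cons] at hnd
    obtain ⟨h1, h2, -⟩ := List.nodup_append.mp hnd
    rcases List.mem_cons.mp hd with rfl | hd
    · exact h1
    · exact ih h2 hd

/-- The key characterization: membership in `L(E)` only depends on the triple. -/
lemma lang_char (E : DME α) (w : Multiset α) :
    w ∈ E.lang ↔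
      (∀ a : α, (a, w.count a) ∈ Ntrip E) ∧
      (∀ a b : α, a ∈ w → b ∈ w → (a, b) ∉ Ctrip E) ∧
      (∀ X ∈ Ptrip E, ∃ a ∈ X, a ∈ w) := by
  constructor
  · intro hw
    exact ⟨fun a => ⟨w, hw, rfl⟩, fun a b ha hb hC => hC ⟨w, hw, ha, hb⟩,
      fun X hX => hX w hw⟩
  · rintro ⟨hN, hC, hP⟩
    have hnd : (E.factors.flatMap symOf).Nodup := E.distinct
    have hN' : ∀ a : α, ∃ u ∈ E.lang, u.count a = w.count a := fun a => hN a
    show w ∈ Lang E.factors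
    apply lang_reconstruct hnd
    · intro a ha
      obtain ⟨u, hu, hcnt⟩ := hN' a
      have hau : a ∈ u := Multiset.count_pos.mp
        (by rw [hcnt]; exact Multiset.count_pos.mpr ha)
      exact lang_support hu a hau
    · intro d hd
      apply factorF (E.nonemptyDisj d hd) (nodup_of_mem hnd hd)
      · intro a ha
        exact (Multiset.mem_filter.mp ha).2
      · intro a had
        obtain ⟨u, hu, hcnt⟩ := hN' a
        refine ⟨u.filter (· ∈ symOf d), lang_restrict hnd hu d hd, ?_⟩
        have had' : a ∈ symOf d := had
        rw [Multiset.count_filter, Multiset.count_filter, if_pos had', if_pos had', hcnt]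
      · intro a b ha hb
        have haw : a ∈ w := Multiset.mem_of_mem_filter ha
        have hbw : b ∈ w := Multiset.mem_of_mem_filter hb
        have hcab := hC a b haw hbw
        simp only [Ctrip, Set.mem_setOf_eq, not_not] at hcab
        obtain ⟨u, hu, hau, hbu⟩ := hcab
        exact ⟨u.filter (· ∈ symOf d), lang_restrict hnd hu d hd,
          Multiset.mem_filter.mpr ⟨hau, (Multiset.mem_filter.mp ha).2⟩,
          Multiset.mem_filter.mpr ⟨hbu, (Multiset.mem_filter.mp hb).2⟩⟩
      · intro h0 hveq
        have hX : {a : α | a ∈ symOf d} ∈ Ptrip E := by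
          intro u hu
          have hud := lang_restrict hnd hu d hd
          have hne0 : u.filter (· ∈ symOf d) ≠ 0 := fun h => h0 (h ▸ hud)
          obtain ⟨a, ha⟩ := Multiset.exists_mem_of_ne_zero hne0
          exact ⟨a, (Multiset.mem_filter.mp ha).2, Multiset.mem_of_mem_filter ha⟩
        obtain ⟨a, haX, haw⟩ := hP _ hX
        have : a ∈ w.filter (· ∈ symOf d) := Multiset.mem_filter.mpr ⟨haw, haX⟩
        rw [hveq] at this
        simp at this

end CharProof

/-- Two DMEs have equal languages iff they have equal
characterizing triples `(C_E, N_E, P_E)`. -/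
theorem dme_lang_eq_iff_triple_eq (α : Type) [Fintype α] [DecidableEq α]
    (E₁ E₂ : DME α) :
    E₁.lang = E₂.lang ↔
      Ctrip E₁ = Ctrip E₂ ∧ Ntrip E₁ = Ntrip E₂ ∧ Ptrip E₁ = Ptrip E₂ := by
  constructor
  · intro h
    refine ⟨?_, ?_, ?_⟩ <;> simp only [Ctrip, Ntrip, Ptrip, h]
  · rintro ⟨h1, h2, h3⟩
    ext w
    rw [lang_char, lang_char, h1, h2, h3]

end LSXML
end

section
/- For every finite alphabet Σ and every finite nonempty set D of trees over Σ all having the same root label, there exists a DMS S over Σ that is minimal consistent with D, i.e., D ⊆ L(S) and there is no DMS S' over Σ with D ⊆ L(S') and L(S') ⊊ L(S). -/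
namespace LSXML

instance : Fintype Mult :=
  ⟨⟨{.star, .plus, .opt, .one, .zero}, by decide⟩, by intro x; cases x <;> decide⟩

noncomputable def univDME (α : Type) [Fintype α] [Nonempty α] : DME α where
  factors := [(Finset.univ.toList.map (fun a => (a, Mult.star)), Mult.star)]
  nonemptyDisj := by
    intro d hd
    simp only [List.mem_singleton] at hd
    subst hd
    simp [List.map_eq_nil_iff, Finset.toList_eq_nil]
    exact Finset.univ_nonempty.ne_empty
  distinct := by
    simp [List.map_map, Function.comp_def]
    exact Finset.nodup_toList _

theorem mem_univDME {α : Type} [Fintype α] [Nonempty α] (w : Multiset α) :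
    w ∈ (univDME α).lang := by
  classical
  refine ⟨w, ?_, 0, rfl, (add_zero w).symm⟩
  refine ⟨w.toFinset.toList.map (fun a => Multiset.replicate (w.count a) a),
    trivial, ?_, ?_⟩
  · rintro u hu
    simp only [List.mem_map] at hu
    obtain ⟨a, _, rfl⟩ := hu
    exact ⟨(a, Mult.star), by simp [univDME], ⟨w.count a, trivial, rfl⟩⟩
  · rw [Finset.sum_map_toList]
    simp_rw [← Multiset.nsmul_singleton]
    exact (Multiset.toFinset_sum_count_nsmul_eq w).symm

theorem sat_univ {α : Type} [Fintype α] [Nonempty α] :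
    ∀ t : UTree α, UTree.Sat (fun _ => univDME α) t
  | .node a ts => UTree.Sat.node a ts (mem_univDME _) (fun t ht => sat_univ t)
termination_by t => sizeOf t
decreasing_by
  have := List.sizeOf_lt_of_mem ht
  simp only [UTree.node.sizeOf_spec]
  omega

instance (α : Type) [Fintype α] : Finite (DME α) := by
  classical
  set n := Fintype.card α with hn
  have hT : Finite {p : List (α × Mult) × Mult // p.1.length ≤ n} := by
    haveI : Finite {l : List (α × Mult) // l.length ≤ n} :=
      (List.finite_length_le (α × Mult) n).to_subtype
    exact Finite.of_injective
      (fun p => ((⟨p.1.1, p.2⟩ : {l : List (α × Mult) // l.length ≤ n}), p.1.2))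
      (by rintro ⟨⟨a, b⟩, h⟩ ⟨⟨c, d⟩, h'⟩ he; simp_all)
  haveI := hT
  haveI : Finite {l : List {p : List (α × Mult) × Mult // p.1.length ≤ n} // l.length ≤ n} :=
    (List.finite_length_le _ n).to_subtype
  -- bounds
  have key : ∀ E : DME α, (∀ d ∈ E.factors, d.1.length ≤ n) ∧ E.factors.length ≤ n := by
    intro E
    have hflat : (E.factors.flatMap fun d => d.1.map Prod.fst).length ≤ n :=
      E.distinct.length_le_card
    rw [List.length_flatMap] at hflat
    simp only [Function.comp_def, List.length_map] at hflat
    constructor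
    · intro d hd
      have : d.1.length ≤ (E.factors.map fun d => d.1.length).sum :=
        List.single_le_sum (by intro x _; omega) _ (List.mem_map_of_mem hd)
      exact this.trans hflat
    · have h1 : ∀ x ∈ (E.factors.map fun d => d.1.length), 1 ≤ x := by
        intro x hx
        simp only [List.mem_map] at hx
        obtain ⟨d, hd, rfl⟩ := hx
        exact List.length_pos_iff.mpr (E.nonemptyDisj d hd)
      have := List.length_le_sum_of_one_le _ h1
      simp only [List.length_map] at this
      exact this.trans hflat
  refine Finite.of_injective
    (fun E => (⟨E.factors.attach.map
        (fun d => ⟨d.1, (key E).1 d.1 d.2⟩), by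
          simpa using (key E).2⟩ :
      {l : List {p : List (α × Mult) × Mult // p.1.length ≤ n} // l.length ≤ n})) ?_
  intro E E' he
  have h2 : E.factors = E'.factors := by
    have := congrArg (fun l => l.val.map Subtype.val) he
    simpa [List.map_map, Function.comp_def, List.attach_map_subtype_val] using this
  cases E; cases E'; simp_all

instance (α : Type) [Fintype α] : Finite (DMS α) :=
  Finite.of_injective (fun S => (S.root, S.rules))
    (by rintro ⟨a, b⟩ ⟨c, d⟩ h; simp_all)

/-- For every finite nonempty set `D` of trees with a common
root label there is a DMS that is minimal consistent with `D`. -/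
theorem exists_minimal_consistent_dms (α : Type) [Fintype α]
    (D : Finset (UTree α)) (hne : D.Nonempty)
    (hroot : ∃ r : α, ∀ t ∈ D, t.label = r) :
    ∃ S : DMS α, ↑D ⊆ S.lang ∧
      ¬ ∃ S' : DMS α, ↑D ⊆ S'.lang ∧ S'.lang ⊂ S.lang := by
  obtain ⟨r, hr⟩ := hroot
  haveI : Nonempty α := ⟨r⟩
  set s : Set (DMS α) := {S | ↑D ⊆ S.lang} with hs
  have hsne : s.Nonempty := by
    refine ⟨⟨r, fun _ => univDME α⟩, ?_⟩
    intro t ht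
    exact ⟨hr t (by simpa using ht), sat_univ t⟩
  obtain ⟨S, hS, hmin⟩ := Set.Finite.exists_minimalFor DMS.lang s (Set.toFinite s) hsne
  refine ⟨S, hS, ?_⟩
  rintro ⟨S', hS', hlt⟩
  exact (not_subset_of_ssubset hlt) (hmin hS' hlt.le)

end LSXML
end
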